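/- arXiv:1003.1969 — 3 statements merged into one kernel-verified Lean document; each statement's English description precedes it below -/
import Mathlib

section
/- For every positive integer N, setting f_N(x) = x^2 - 4·(2N)! and a_i = i! + (2N)!/i! for 1 ≤ i ≤ N, the sequence (a_i)_{i=1}^N is strictly decreasing in positive integers and each f_N(a_i) is a perfect square in ℤ. -/
lemma fac_mul_fac_lt (N i j : ℕ) (hij : i < j) (hjN : j ≤ N) (hN : 0 < N) :
    i.factorial * j.factorial < (2 * N).factorial := by
  calc i.factorial * j.factorial ≤ (i + j).factorial :=
        Nat.le_of_dvd (Nat.factorial_pos _) (Nat.factorial_mul_factorial_dvd_factorial_add i j)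
    _ < (2 * N).factorial := (Nat.factorial_lt (by omega)).mpr (by omega)

theorem buchi_M_dependence_on_sequence (N : ℕ) (hN : 0 < N) :
    (∀ i j : ℕ, 1 ≤ i → i < j → j ≤ N →
      (j.factorial + (2 * N).factorial / j.factorial)
        < (i.factorial + (2 * N).factorial / i.factorial)) ∧
    (∀ i : ℕ, 1 ≤ i → i ≤ N →
      0 < i.factorial + (2 * N).factorial / i.factorial) ∧
    (∀ i : ℕ, 1 ≤ i → i ≤ N →
      ∃ m : ℤ,
        ((i.factorial + (2 * N).factorial / i.factorial : ℕ) : ℤ)^2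
          - 4 * ((2 * N).factorial : ℤ) = m^2) := by
  refine ⟨?_, ?_, ?_⟩
  · intro i j hi hij hjN
    have hdvd_i : i.factorial ∣ (2 * N).factorial :=
      Nat.factorial_dvd_factorial (by omega)
    have hdvd_j : j.factorial ∣ (2 * N).factorial :=
      Nat.factorial_dvd_factorial (by omega)
    have hdij : i.factorial ∣ j.factorial := Nat.factorial_dvd_factorial hij.le
    set ci := (2 * N).factorial / i.factorial with hci
    set cj := (2 * N).factorial / j.factorial with hcj
    have hc_i : i.factorial * ci = (2 * N).factorial := Nat.mul_div_cancel' hdvd_i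
    have hc_j : j.factorial * cj = (2 * N).factorial := Nat.mul_div_cancel' hdvd_j
    set d := j.factorial / i.factorial with hd
    have hjd : j.factorial = i.factorial * d := (Nat.mul_div_cancel' hdij).symm
    have hipos : 0 < i.factorial := Nat.factorial_pos i
    have hd2 : 2 ≤ d := by
      have h1 : (i + 1).factorial ≤ j.factorial := Nat.factorial_le (by omega)
      rw [Nat.factorial_succ] at h1
      rw [hjd] at h1
      have h2 : i.factorial * 2 ≤ i.factorial * d := by nlinarith
      exact Nat.le_of_mul_le_mul_left h2 hipos
    have hci_eq : ci = d * cj := by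
      have : i.factorial * ci = i.factorial * (d * cj) := by
        rw [hc_i, ← hc_j, hjd]; ring
      exact Nat.eq_of_mul_eq_mul_left hipos this
    have hlt : i.factorial < cj := by
      have h := fac_mul_fac_lt N i j hij hjN hN
      rw [← hc_j] at h
      rcases Nat.lt_or_ge i.factorial cj with h' | h'
      · exact h'
      · exfalso
        have : j.factorial * cj ≤ i.factorial * j.factorial :=
          by calc j.factorial * cj ≤ j.factorial * i.factorial :=
                Nat.mul_le_mul_left _ h'
            _ = i.factorial * j.factorial := Nat.mul_comm _ _
        omega
    rw [hjd, hci_eq]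
    nlinarith [Nat.factorial_pos j]
  · intro i hi hiN
    exact Nat.add_pos_left (Nat.factorial_pos i) _
  · intro i hi hiN
    have hdvd_i : i.factorial ∣ (2 * N).factorial :=
      Nat.factorial_dvd_factorial (by omega)
    set ci := (2 * N).factorial / i.factorial with hci
    have hc_i : i.factorial * ci = (2 * N).factorial := Nat.mul_div_cancel' hdvd_i
    refine ⟨(ci : ℤ) - (i.factorial : ℤ), ?_⟩
    have : ((2 * N).factorial : ℤ) = (i.factorial : ℤ) * (ci : ℤ) := by
      exact_mod_cast hc_i.symm
    rw [this]
    push_cast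
    ring
end

section
/- Let K be a field of characteristic ≠ 2, a_1 ≠ a_2 in K, and b_1, b_2 ∈ K. Suppose ε' b_2 = ε b_1 + (a_2 - a_1) for signs ε, ε' ∈ {1, -1}. Then the monic quadratic f determined by f(a_1) = b_1^2, f(a_2) = b_2^2 (as in the explicit formula with u = (b_2^2 - b_1^2 - a_2^2 + a_1^2)/(a_2 - a_1)) has discriminant zero, i.e. f(x) = (x + u/2)^2. -/
open Polynomial in
theorem square_poly_aux {K : Type*} [Field K] (h2 : (2 : K) ≠ 0) (u v : K)
    (h : u^2 - 4 * v = 0) :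
    (X^2 + C u * X + C v : K[X]) = (X + C (u / 2))^2 := by
  obtain ⟨w, rfl⟩ : ∃ w, u = w * 2 := ⟨u / 2, (div_mul_cancel₀ u h2).symm⟩
  have h4 : (4 : K) ≠ 0 := by
    have := mul_ne_zero h2 h2
    norm_num at this
    exact this
  have hz : (4 : K) * (w^2 - v) = 0 := by linear_combination h
  have hv : v = w^2 := (sub_eq_zero.mp ((mul_eq_zero.mp hz).resolve_left h4)).symm
  rw [hv, mul_div_cancel_right₀ w h2, map_mul, map_ofNat, map_pow]
  ring

open Polynomial in
theorem trivial_line_gives_square_polynomial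
    {K : Type*} [Field K] (h2 : (2 : K) ≠ 0)
    (a₁ a₂ b₁ b₂ ε ε' : K) (hne : a₁ ≠ a₂)
    (hε : ε = 1 ∨ ε = -1) (hε' : ε' = 1 ∨ ε' = -1)
    (hline : ε' * b₂ = ε * b₁ + (a₂ - a₁)) :
    let u : K := (b₂^2 - b₁^2 - a₂^2 + a₁^2) / (a₂ - a₁)
    let v : K := (a₁ * a₂ * (a₂ - a₁) - a₁ * b₂^2 + a₂ * b₁^2) / (a₂ - a₁)
    u^2 - 4 * v = 0 ∧
      (X^2 + C u * X + C v : K[X]) = (X + C (u / 2))^2 := by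
  intro u v
  have hd : a₂ - a₁ ≠ 0 := sub_ne_zero.mpr (Ne.symm hne)
  have hε'2 : ε'^2 = 1 := by rcases hε' with h | h <;> simp [h]
  have hsq : b₂^2 = (ε * b₁ + (a₂ - a₁))^2 := by
    have := congrArg (· ^ 2) hline
    simp only [mul_pow, hε'2, one_mul] at this
    exact this
  have huv : u^2 - 4 * v = 0 := by
    show ((b₂^2 - b₁^2 - a₂^2 + a₁^2) / (a₂ - a₁))^2 -
      4 * ((a₁ * a₂ * (a₂ - a₁) - a₁ * b₂^2 + a₂ * b₁^2) / (a₂ - a₁)) = 0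
    rw [hsq]
    rcases hε with h | h <;> subst h <;> field_simp <;> ring
  exact ⟨huv, square_poly_aux h2 u v huv⟩
end

section
/- Let δ_2, ..., δ_n (n ≥ 3) be distinct nonzero elements of an algebraically closed field K, and let [x_0 : ... : x_n] be a point of the surface X_n defined by δ_2 x_i^2 = δ_i δ_2 (δ_i - δ_2) x_0^2 - (δ_i - δ_2) x_1^2 + δ_i x_2^2 (3 ≤ i ≤ n). Then at most two of the coordinates x_0, x_1, ..., x_n are zero. -/
open scoped Classical

theorem buchi_surface_at_most_two_zero_coordinates
    {K : Type*} [Field K] [IsAlgClosed K] (n : ℕ) (hn : 3 ≤ n)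
    (δ : ℕ → K)
    (hδ : ∀ i, 2 ≤ i → i ≤ n → δ i ≠ 0)
    (hδdist : ∀ i j, 2 ≤ i → i < j → j ≤ n → δ i ≠ δ j)
    (x : ℕ → K)
    (hx : ∃ i, i ≤ n ∧ x i ≠ 0)
    (heq : ∀ i, 3 ≤ i → i ≤ n →
      δ 2 * (x i)^2 =
        δ i * δ 2 * (δ i - δ 2) * (x 0)^2
          - (δ i - δ 2) * (x 1)^2 + δ i * (x 2)^2) :
    ((Finset.range (n + 1)).filter (fun i => x i = 0)).card ≤ 2 := by
  have hδ2 : δ 2 ≠ 0 := hδ 2 le_rfl (by omega)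
  have sq0 : ∀ m : K, m ^ 2 = 0 → m = 0 := fun m h =>
    pow_eq_zero_iff (two_ne_zero) |>.mp h
  by_contra hcard
  push_neg at hcard
  have key : ∀ i j k, i < j → j < k → k ≤ n → x i = 0 → x j = 0 → x k = 0 →
      x 0 = 0 ∧ x 1 = 0 ∧ x 2 = 0 := by
    intro i j k hij hjk hkn hxi hxj hxk
    rcases Nat.lt_or_ge k 3 with hk3 | hk3
    · have : i = 0 ∧ j = 1 ∧ k = 2 := by omega
      obtain ⟨rfl, rfl, rfl⟩ := this
      exact ⟨hxi, hxj, hxk⟩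
    · have Ek := heq k hk3 hkn
      have hδk : δ k ≠ 0 := hδ k (by omega) hkn
      have hk2ne : δ k - δ 2 ≠ 0 :=
        sub_ne_zero.mpr (Ne.symm (hδdist 2 k le_rfl (by omega) hkn))
      have hksq : x k ^ 2 = 0 := by rw [hxk]; ring
      rcases Nat.lt_or_ge j 3 with hj3 | hj3
      · rcases (show j = 1 ∧ i = 0 ∨ j = 2 ∧ i = 0 ∨ j = 2 ∧ i = 1 from by omega) with
          ⟨rfl, rfl⟩ | ⟨rfl, rfl⟩ | ⟨rfl, rfl⟩
        · -- x0 = x1 = 0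
          have h0sq : x 0 ^ 2 = 0 := by rw [hxi]; ring
          have h1sq : x 1 ^ 2 = 0 := by rw [hxj]; ring
          have h2 : δ k * x 2 ^ 2 = 0 := by
            linear_combination -Ek - δ k * δ 2 * (δ k - δ 2) * h0sq
              + (δ k - δ 2) * h1sq + δ 2 * hksq
          exact ⟨hxi, hxj, sq0 _ ((mul_eq_zero.mp h2).resolve_left hδk)⟩
        · -- x0 = x2 = 0
          have h0sq : x 0 ^ 2 = 0 := by rw [hxi]; ring
          have h2sq : x 2 ^ 2 = 0 := by rw [hxj]; ring
          have h1 : (δ k - δ 2) * x 1 ^ 2 = 0 := by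
            linear_combination Ek + δ k * δ 2 * (δ k - δ 2) * h0sq
              + δ k * h2sq - δ 2 * hksq
          exact ⟨hxi, sq0 _ ((mul_eq_zero.mp h1).resolve_left hk2ne), hxj⟩
        · -- x1 = x2 = 0
          have h1sq : x 1 ^ 2 = 0 := by rw [hxi]; ring
          have h2sq : x 2 ^ 2 = 0 := by rw [hxj]; ring
          have h0 : δ k * δ 2 * (δ k - δ 2) * x 0 ^ 2 = 0 := by
            linear_combination -Ek + (δ k - δ 2) * h1sq - δ k * h2sq + δ 2 * hksq
          have h0' := (mul_eq_zero.mp h0).resolve_left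
            (mul_ne_zero (mul_ne_zero hδk hδ2) hk2ne)
          exact ⟨sq0 _ h0', hxi, hxj⟩
      · -- j ≥ 3
        have hjn : j ≤ n := by omega
        have Ej := heq j hj3 hjn
        have hδj : δ j ≠ 0 := hδ j (by omega) hjn
        have hj2ne : δ j - δ 2 ≠ 0 :=
          sub_ne_zero.mpr (Ne.symm (hδdist 2 j le_rfl (by omega) hjn))
        have hjkne : δ j - δ k ≠ 0 := sub_ne_zero.mpr (hδdist j k (by omega) hjk hkn)
        have hkjne : δ k - δ j ≠ 0 :=
          sub_ne_zero.mpr (Ne.symm (hδdist j k (by omega) hjk hkn))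
        have hjsq : x j ^ 2 = 0 := by rw [hxj]; ring
        rcases Nat.lt_or_ge i 3 with hi3 | hi3
        · rcases (show i = 0 ∨ i = 1 ∨ i = 2 from by omega) with rfl | rfl | rfl
          · -- x0 = 0
            have h0sq : x 0 ^ 2 = 0 := by rw [hxi]; ring
            have h1 : δ 2 * (δ j - δ k) * x 1 ^ 2 = 0 := by
              linear_combination δ k * Ej - δ j * Ek - δ 2 * δ k * hjsq
                + δ 2 * δ j * hksq + δ j * δ k * δ 2 * (δ j - δ k) * h0sq
            have hx1 : x 1 = 0 := sq0 _ ((mul_eq_zero.mp h1).resolve_left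
              (mul_ne_zero hδ2 hjkne))
            have h1sq : x 1 ^ 2 = 0 := by rw [hx1]; ring
            have h2 : δ j * x 2 ^ 2 = 0 := by
              linear_combination -Ej - δ j * δ 2 * (δ j - δ 2) * h0sq
                + (δ j - δ 2) * h1sq + δ 2 * hjsq
            exact ⟨hxi, hx1, sq0 _ ((mul_eq_zero.mp h2).resolve_left hδj)⟩
          · -- x1 = 0
            have h1sq : x 1 ^ 2 = 0 := by rw [hxi]; ring
            have h0 : δ j * δ k * δ 2 * (δ k - δ j) * x 0 ^ 2 = 0 := by
              linear_combination δ k * Ej - δ j * Ek - δ 2 * δ k * hjsq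
                + δ 2 * δ j * hksq - δ 2 * (δ j - δ k) * h1sq
            have hx0 : x 0 = 0 := sq0 _ ((mul_eq_zero.mp h0).resolve_left
              (mul_ne_zero (mul_ne_zero (mul_ne_zero hδj hδk) hδ2) hkjne))
            have h0sq : x 0 ^ 2 = 0 := by rw [hx0]; ring
            have h2 : δ j * x 2 ^ 2 = 0 := by
              linear_combination -Ej - δ j * δ 2 * (δ j - δ 2) * h0sq
                + (δ j - δ 2) * h1sq + δ 2 * hjsq
            exact ⟨hx0, hxi, sq0 _ ((mul_eq_zero.mp h2).resolve_left hδj)⟩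
          · -- x2 = 0
            have h2sq : x 2 ^ 2 = 0 := by rw [hxi]; ring
            have h0 : δ 2 * (δ j - δ 2) * (δ k - δ 2) * (δ k - δ j) * x 0 ^ 2 = 0 := by
              linear_combination (δ k - δ 2) * Ej - (δ j - δ 2) * Ek
                - δ 2 * (δ k - δ 2) * hjsq + δ 2 * (δ j - δ 2) * hksq
                - δ 2 * (δ j - δ k) * h2sq
            have hx0 : x 0 = 0 := sq0 _ ((mul_eq_zero.mp h0).resolve_left
              (mul_ne_zero (mul_ne_zero (mul_ne_zero hδ2 hj2ne) hk2ne) hkjne))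
            have h0sq : x 0 ^ 2 = 0 := by rw [hx0]; ring
            have h1 : (δ j - δ 2) * x 1 ^ 2 = 0 := by
              linear_combination Ej - δ 2 * hjsq + δ j * δ 2 * (δ j - δ 2) * h0sq
                + δ j * h2sq
            exact ⟨hx0, sq0 _ ((mul_eq_zero.mp h1).resolve_left hj2ne), hxi⟩
        · -- 3 ≤ i < j < k
          have hin : i ≤ n := by omega
          have Ei := heq i hi3 hin
          have hδi : δ i ≠ 0 := hδ i (by omega) hin
          have hi2ne : δ i - δ 2 ≠ 0 :=
            sub_ne_zero.mpr (Ne.symm (hδdist 2 i le_rfl (by omega) hin))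
          have hjine : δ j - δ i ≠ 0 :=
            sub_ne_zero.mpr (Ne.symm (hδdist i j (by omega) hij hjn))
          have hkine : δ k - δ i ≠ 0 :=
            sub_ne_zero.mpr (Ne.symm (hδdist i k (by omega) (hij.trans hjk) hkn))
          have hisq : x i ^ 2 = 0 := by rw [hxi]; ring
          have E1 : δ 2 * (δ j - δ i) * (δ i * δ j * x 0 ^ 2 - x 1 ^ 2) = 0 := by
            linear_combination δ j * Ei - δ i * Ej - δ 2 * δ j * hisq + δ 2 * δ i * hjsq
          have E2 : δ 2 * (δ k - δ i) * (δ i * δ k * x 0 ^ 2 - x 1 ^ 2) = 0 := by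
            linear_combination δ k * Ei - δ i * Ek - δ 2 * δ k * hisq + δ 2 * δ i * hksq
          have E1' : δ i * δ j * x 0 ^ 2 - x 1 ^ 2 = 0 :=
            (mul_eq_zero.mp E1).resolve_left (mul_ne_zero hδ2 hjine)
          have E2' : δ i * δ k * x 0 ^ 2 - x 1 ^ 2 = 0 :=
            (mul_eq_zero.mp E2).resolve_left (mul_ne_zero hδ2 hkine)
          have h0 : δ i * (δ j - δ k) * x 0 ^ 2 = 0 := by
            linear_combination E1' - E2'
          have hx0 : x 0 = 0 := sq0 _ ((mul_eq_zero.mp h0).resolve_left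
            (mul_ne_zero hδi hjkne))
          have h0sq : x 0 ^ 2 = 0 := by rw [hx0]; ring
          have hx1 : x 1 = 0 := by
            have : x 1 ^ 2 = 0 := by linear_combination -E1' + δ i * δ j * h0sq
            exact sq0 _ this
          have h1sq : x 1 ^ 2 = 0 := by rw [hx1]; ring
          have h2 : δ i * x 2 ^ 2 = 0 := by
            linear_combination -Ei - δ i * δ 2 * (δ i - δ 2) * h0sq
              + (δ i - δ 2) * h1sq + δ 2 * hisq
          exact ⟨hx0, hx1, sq0 _ ((mul_eq_zero.mp h2).resolve_left hδi)⟩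
  obtain ⟨a, b, c, ha, hb, hc, hab, hac, hbc⟩ := Finset.two_lt_card_iff.mp hcard
  simp only [Finset.mem_filter, Finset.mem_range, Nat.lt_succ_iff] at ha hb hc
  obtain ⟨han, hxa⟩ := ha
  obtain ⟨hbn, hxb⟩ := hb
  obtain ⟨hcn, hxc⟩ := hc
  have h012 : x 0 = 0 ∧ x 1 = 0 ∧ x 2 = 0 := by
    rcases lt_trichotomy a b with h1 | h1 | h1
    · rcases lt_trichotomy b c with h2 | h2 | h2
      · exact key a b c h1 h2 hcn hxa hxb hxc
      · exact absurd h2 hbc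
      · rcases lt_trichotomy a c with h3 | h3 | h3
        · exact key a c b h3 h2 hbn hxa hxc hxb
        · exact absurd h3 hac
        · exact key c a b h3 h1 hbn hxc hxa hxb
    · exact absurd h1 hab
    · rcases lt_trichotomy a c with h2 | h2 | h2
      · exact key b a c h1 h2 hcn hxb hxa hxc
      · exact absurd h2 hac
      · rcases lt_trichotomy b c with h3 | h3 | h3
        · exact key b c a h3 h2 han hxb hxc hxa
        · exact absurd h3 hbc
        · exact key c b a h3 h1 han hxc hxb hxa
  obtain ⟨h0, h1, h2⟩ := h012
  obtain ⟨m, hmn, hxm⟩ := hx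
  rcases Nat.lt_or_ge m 3 with hm3 | hm3
  · interval_cases m <;> [exact hxm h0; exact hxm h1; exact hxm h2]
  · have Em := heq m hm3 hmn
    rw [h0, h1, h2] at Em
    have : δ 2 * x m ^ 2 = 0 := by linear_combination Em
    exact hxm (sq0 _ ((mul_eq_zero.mp this).resolve_left hδ2))
end
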